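/- At energy E = 0, with aₙ = nᵅ, b_{2n-1} = b(2n-1)ᵅ, b_{2n} = 0 (b ≠ 0, 0 < α ≤ 1), the transfer matrix product satisfies Bₙ···B₁ = (-1)ⁿ n^{-α/2}[[C₁C₃ + o(1), C₂C₃bn + O(log n)],[0, C₂C₃ + o(1)]] for nonzero constants C₁, C₂, C₃; where Bₙ = T_{2n}T_{2n-1}. In particular, the product has an entry growing like n^{1-α/2}, and every nontrivial solution u of the difference equation aₙu_{n+1} + bₙuₙ + a_{n-1}u_{n-1} = 0 satisfies ∑|uₙ|² = ∞, so zero is not an eigenvalue of J. -/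

import Mathlib

private lemma sq_rpow' (α C : ℝ) (hC : 0 ≤ C) : (C ^ α) ^ 2 = (C ^ 2) ^ α := by
  rw [sq, sq, ← Real.mul_rpow hC hC]

private lemma step_sq' (α x y A B : ℝ) (hA : 0 < A) (hB : 0 < B)
    (h : A ^ α * y + B ^ α * x = 0) :
    y ^ 2 = (B ^ 2 / A ^ 2) ^ α * x ^ 2 := by
  have hAα : (0:ℝ) < A ^ α := Real.rpow_pos_of_pos hA α
  have h2 : (A ^ α) ^ 2 * y ^ 2 = (B ^ α) ^ 2 * x ^ 2 := by
    linear_combination (A ^ α * y - B ^ α * x) * h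
  rw [Real.div_rpow (by positivity) (by positivity), ← sq_rpow' α B hB.le,
    ← sq_rpow' α A hA.le]
  field_simp
  linarith [h2]

/-- at energy `E = 0`, with `aₙ = nᵅ`, `b_{2n-1} = b(2n-1)ᵅ`,
`b_{2n} = 0` (`b ≠ 0`, `0 < α ≤ 1`), every nontrivial solution of
`aₙ u_{n+1} + bₙ uₙ + a_{n-1} u_{n-1} = 0` fails to be square-summable;
in particular zero is not an eigenvalue of `J`. -/
theorem stmt12 (b α : ℝ) (hb : b ≠ 0) (h0 : 0 < α) (h1 : α ≤ 1)
    (u : ℕ → ℝ)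
    (hu : ∀ n : ℕ, 1 ≤ n →
      (n : ℝ) ^ α * u (n + 1) + (if Odd n then b * (n : ℝ) ^ α else 0) * u n
        + ((n : ℝ) - 1) ^ α * u (n - 1) = 0)
    (hnt : ∃ n : ℕ, 1 ≤ n ∧ u n ≠ 0) :
    ¬ Summable (fun n : ℕ => (u n) ^ 2) := by
  intro hS
  by_cases h1' : u 1 = 0
  · -- then the whole solution (for n ≥ 1) vanishes, contradicting nontriviality
    have key : ∀ n : ℕ, 1 ≤ n → u n = 0 ∧ u (n + 1) = 0 := by
      intro n hn
      induction n, hn using Nat.le_induction with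
      | base =>
        refine ⟨h1', ?_⟩
        have h := hu 1 le_rfl
        rw [h1'] at h
        norm_num [Real.zero_rpow h0.ne', Real.one_rpow] at h
        exact h
      | succ n hn ih =>
        refine ⟨ih.2, ?_⟩
        have h := hu (n + 1) (by omega)
        simp only [Nat.add_sub_cancel] at h
        rw [ih.1, ih.2] at h
        simp only [mul_zero, add_zero] at h
        have hpos : (0:ℝ) < ((n + 1 : ℕ) : ℝ) ^ α :=
          Real.rpow_pos_of_pos (by positivity) α
        rcases mul_eq_zero.mp h with h' | h'
        · exact absurd h' hpos.ne'
        · exact h'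
    obtain ⟨n, hn, hun⟩ := hnt
    exact hun (key n hn).1
  · -- u 1 ≠ 0 : the odd-indexed subsequence is too large
    have h3 : u 3 ^ 2 = ((1:ℝ) ^ 2 / (2:ℝ) ^ 2) ^ α * u 1 ^ 2 := by
      have h := hu 2 (by omega)
      norm_num [Nat.odd_iff] at h
      exact step_sq' α (u 1) (u 3) 2 1 two_pos one_pos (by
        rw [Real.one_rpow]; linarith)
    have main : ∀ k : ℕ, 1 ≤ k →
        u 1 ^ 2 * (1 / (4 * (k : ℝ))) ^ α ≤ u (2 * k + 1) ^ 2 := by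
      intro k hk
      induction k, hk using Nat.le_induction with
      | base =>
        rw [h3]
        norm_num
        rw [mul_comm]
      | succ k hk ih =>
        have hk1 : (1:ℝ) ≤ (k : ℝ) := by exact_mod_cast hk
        have h := hu (2 * k + 2) (by omega)
        have hne : ¬ Odd (2 * k + 2) := by simp [Nat.odd_iff]
        rw [if_neg hne] at h
        have hidx : 2 * k + 2 - 1 = 2 * k + 1 := by omega
        rw [hidx] at h
        have hc : ((2 * k + 2 : ℕ) : ℝ) = 2 * (k : ℝ) + 2 := by push_cast; ring
        rw [hc] at h
        have h' : (2 * (k : ℝ) + 2) ^ α * u (2 * k + 2 + 1)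
            + (2 * (k : ℝ) + 1) ^ α * u (2 * k + 1) = 0 := by
          have he : (2 * (k : ℝ) + 2) - 1 = 2 * (k : ℝ) + 1 := by ring
          rw [he] at h
          linarith
        have hsq := step_sq' α (u (2 * k + 1)) (u (2 * k + 2 + 1))
          (2 * (k : ℝ) + 2) (2 * (k : ℝ) + 1) (by positivity) (by positivity) h'
        have hq : (0:ℝ) ≤ (2 * (k : ℝ) + 1) ^ 2 / (2 * (k : ℝ) + 2) ^ 2 := by
          positivity
        have hcomp : (1 : ℝ) / (4 * ((k : ℝ) + 1)) ≤
            (2 * (k : ℝ) + 1) ^ 2 / (2 * (k : ℝ) + 2) ^ 2 * (1 / (4 * (k : ℝ))) := by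
          rw [div_mul_div_comm, div_le_div_iff₀ (by positivity) (by positivity)]
          nlinarith [hk1]
        have hgoal_idx : 2 * (k + 1) + 1 = 2 * k + 2 + 1 := by ring
        rw [hgoal_idx]
        have hcast : ((k + 1 : ℕ) : ℝ) = (k : ℝ) + 1 := by push_cast; ring
        rw [hcast]
        calc u 1 ^ 2 * (1 / (4 * ((k : ℝ) + 1))) ^ α
            ≤ u 1 ^ 2 * ((2 * (k : ℝ) + 1) ^ 2 / (2 * (k : ℝ) + 2) ^ 2
                * (1 / (4 * (k : ℝ)))) ^ α := by
              apply mul_le_mul_of_nonneg_left _ (sq_nonneg _)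
              exact Real.rpow_le_rpow (by positivity) hcomp h0.le
          _ = ((2 * (k : ℝ) + 1) ^ 2 / (2 * (k : ℝ) + 2) ^ 2) ^ α
                * (u 1 ^ 2 * (1 / (4 * (k : ℝ))) ^ α) := by
              rw [Real.mul_rpow hq (by positivity)]; ring
          _ ≤ ((2 * (k : ℝ) + 1) ^ 2 / (2 * (k : ℝ) + 2) ^ 2) ^ α
                * u (2 * k + 1) ^ 2 := by
              exact mul_le_mul_of_nonneg_left ih (Real.rpow_nonneg hq α)
          _ = u (2 * k + 2 + 1) ^ 2 := hsq.symm
    -- extract the summable subsequence and contradict harmonic divergence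
    have hinj : Function.Injective (fun k : ℕ => 2 * (k + 1) + 1) := by
      intro a b hab
      simp only at hab
      omega
    have hsub : Summable (fun k : ℕ => u (2 * (k + 1) + 1) ^ 2) :=
      hS.comp_injective hinj
    have hle : ∀ k : ℕ,
        u 1 ^ 2 * (1 / (4 * ((k : ℝ) + 1))) ≤ u (2 * (k + 1) + 1) ^ 2 := by
      intro k
      have hm := main (k + 1) (by omega)
      push_cast at hm
      have hx : (0:ℝ) < 1 / (4 * ((k : ℝ) + 1)) := by positivity
      have hxle : 1 / (4 * ((k : ℝ) + 1)) ≤ 1 := by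
        rw [div_le_one (by positivity)]
        nlinarith [Nat.cast_nonneg (α := ℝ) k]
      have hpow : 1 / (4 * ((k : ℝ) + 1)) ≤ (1 / (4 * ((k : ℝ) + 1))) ^ α := by
        calc 1 / (4 * ((k : ℝ) + 1)) = (1 / (4 * ((k : ℝ) + 1))) ^ (1:ℝ) :=
              (Real.rpow_one _).symm
          _ ≤ (1 / (4 * ((k : ℝ) + 1))) ^ α :=
              Real.rpow_le_rpow_of_exponent_ge hx hxle h1
      nlinarith [mul_le_mul_of_nonneg_left hpow (sq_nonneg (u 1))]
    have hsum : Summable (fun k : ℕ => u 1 ^ 2 * (1 / (4 * ((k : ℝ) + 1)))) :=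
      Summable.of_nonneg_of_le (fun k => by positivity) hle hsub
    have hu1sq : (0:ℝ) < u 1 ^ 2 := by positivity
    have hsum2 : Summable (fun k : ℕ => 1 / ((k : ℝ) + 1)) := by
      have h4 := hsum.mul_left (4 / u 1 ^ 2)
      refine h4.congr fun k => ?_
      field_simp
    have hsum3 : Summable (fun n : ℕ => 1 / ((n + 1 : ℕ) : ℝ)) := by
      refine hsum2.congr fun n => ?_
      push_cast
      ring
    exact Real.not_summable_one_div_natCast ((summable_nat_add_iff 1).mp hsum3)
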